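/- arXiv:2301.01242 — 2 statements merged into one kernel-verified Lean document; each statement's English description precedes it below -/
import Mathlib

section
/- Let a : ℤ^d → ℝ with a(z) ≥ 0, a(0)=0, Σ_z a(z) = 1, and let μ : ℤ^d → ℝ be a positive weight satisfying sup_x μ(x+z)/μ(x) ≤ μ(0)/μ(z) for all z. Define the convolution operator (Āf)(x) = Σ_z a(z) f(x−z) on the weighted space l²(ℤ^d, μ). Then the operator norm of Ā satisfies ‖Ā‖_μ ≤ Σ_{z≠0} a(z) √(μ(0)/μ(z)). -/
open Filter Topology

private lemma tsum_cauchy_schwarz {ι : Type*} (u v : ι → ℝ)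
    (hu : Summable fun i => u i ^ 2) (hv : Summable fun i => v i ^ 2) :
    (∑' i, u i * v i) ^ 2 ≤ (∑' i, u i ^ 2) * ∑' i, v i ^ 2 := by
  have huv : Summable fun i => u i * v i := by
    apply Summable.of_abs
    apply Summable.of_nonneg_of_le (fun i => abs_nonneg _) (fun i => ?_)
      ((hu.add hv).div_const 2)
    rw [abs_mul]
    have h := two_mul_le_add_sq |u i| |v i|
    rw [sq_abs, sq_abs] at h
    linarith
  have key : ∀ s : Finset ι,
      (∑ i ∈ s, u i * v i) ^ 2 ≤ (∑' i, u i ^ 2) * ∑' i, v i ^ 2 := by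
    intro s
    calc (∑ i ∈ s, u i * v i) ^ 2
        ≤ (∑ i ∈ s, u i ^ 2) * ∑ i ∈ s, v i ^ 2 :=
          Finset.sum_mul_sq_le_sq_mul_sq s u v
      _ ≤ (∑' i, u i ^ 2) * ∑' i, v i ^ 2 :=
          mul_le_mul (Summable.sum_le_tsum s (fun i _ => sq_nonneg _) hu)
            (Summable.sum_le_tsum s (fun i _ => sq_nonneg _) hv)
            (Finset.sum_nonneg fun i _ => sq_nonneg _)
            (tsum_nonneg fun i => sq_nonneg _)
  have htend : Tendsto (fun s : Finset ι => (∑ i ∈ s, u i * v i) ^ 2)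
      atTop (𝓝 ((∑' i, u i * v i) ^ 2)) := huv.hasSum.pow 2
  exact le_of_tendsto htend (Filter.Eventually.of_forall key)

/-- norm bound `‖Ā‖_μ ≤ Σ_{z≠0} a(z) √(μ(0)/μ(z))` for the
convolution operator `(Āf)(x) = Σ_z a(z) f(x−z)` on `l²(ℤ^d, μ)`, stated as the
squared inequality `‖Āf‖²_μ ≤ (Σ_z a(z)√(μ(0)/μ(z)))² ‖f‖²_μ`. -/
theorem stmt2 {d : ℕ} (a : (Fin d → ℤ) → ℝ) (μ : (Fin d → ℤ) → ℝ)
    (ha_nonneg : ∀ z, 0 ≤ a z) (ha0 : a 0 = 0) (ha_sum : HasSum a 1)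
    (hμ_pos : ∀ x, 0 < μ x) (hμ_sum : Summable μ)
    (hμ_reg : ∀ z x : Fin d → ℤ, μ (x + z) / μ x ≤ μ 0 / μ z)
    (hS : Summable fun z => a z * Real.sqrt (μ 0 / μ z))
    (f : (Fin d → ℤ) → ℝ) (hf : Summable fun x => f x ^ 2 * μ x)
    (hAf : Summable fun x => (∑' z, a z * f (x - z)) ^ 2 * μ x) :
    (∑' x, (∑' z, a z * f (x - z)) ^ 2 * μ x) ≤
      (∑' z, a z * Real.sqrt (μ 0 / μ z)) ^ 2 * ∑' x, f x ^ 2 * μ x := by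
  set s : (Fin d → ℤ) → ℝ := fun z => Real.sqrt (μ 0 / μ z) with hs_def
  have hs_pos : ∀ z, 0 < s z := fun z =>
    Real.sqrt_pos.2 (div_pos (hμ_pos 0) (hμ_pos z))
  have hs_sq : ∀ z, s z * s z = μ 0 / μ z := fun z =>
    Real.mul_self_sqrt (le_of_lt (div_pos (hμ_pos 0) (hμ_pos z)))
  set b : (Fin d → ℤ) → ℝ := fun z => a z * s z with hb_def
  set c : (Fin d → ℤ) → ℝ := fun z => a z / s z with hc_def
  have hc_nonneg : ∀ z, 0 ≤ c z := fun z =>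
    div_nonneg (ha_nonneg z) (hs_pos z).le
  have hb_nonneg : ∀ z, 0 ≤ b z := fun z =>
    mul_nonneg (ha_nonneg z) (hs_pos z).le
  have hcb : ∀ z, c z * (μ 0 / μ z) = b z := by
    intro z
    rw [← hs_sq z, hc_def, hb_def]
    calc a z / s z * (s z * s z) = a z * s z * (s z / s z) := by ring
      _ = a z * s z := by rw [div_self (hs_pos z).ne', mul_one]
  have hb_sum : Summable b := hS
  set N : ℝ := ∑' x, f x ^ 2 * μ x with hN_def
  have hN_nonneg : 0 ≤ N := tsum_nonneg fun x =>
    mul_nonneg (sq_nonneg _) (hμ_pos x).le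
  set S : ℝ := ∑' z, a z * s z with hS_def
  have hS_nonneg : 0 ≤ S := tsum_nonneg fun z => hb_nonneg z
  -- weight bound
  have hμ_bd : ∀ z y : Fin d → ℤ, μ (y + z) ≤ μ 0 / μ z * μ y := by
    intro z y
    have := hμ_reg z y
    rwa [div_le_iff₀ (hμ_pos y)] at this
  -- shifted sums
  have hshift_summable' : ∀ z : Fin d → ℤ, Summable fun y => f y ^ 2 * μ (y + z) := by
    intro z
    apply Summable.of_nonneg_of_le
      (fun y => mul_nonneg (sq_nonneg _) (hμ_pos _).le)
      (fun y => mul_le_mul_of_nonneg_left (hμ_bd z y) (sq_nonneg _))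
    exact (hf.mul_left (μ 0 / μ z)).congr (fun y => by ring)
  have hshift_summable : ∀ z : Fin d → ℤ, Summable fun x => f (x - z) ^ 2 * μ x := by
    intro z
    rw [← (Equiv.addRight z).summable_iff]
    refine (hshift_summable' z).congr fun y => ?_
    simp [Function.comp, add_sub_cancel_right]
  have hshift_bd : ∀ z : Fin d → ℤ, (∑' x, f (x - z) ^ 2 * μ x) ≤ μ 0 / μ z * N := by
    intro z
    rw [← (Equiv.addRight z).tsum_eq (fun x => f (x - z) ^ 2 * μ x)]
    simp only [Equiv.coe_addRight, add_sub_cancel_right]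
    calc (∑' y, f y ^ 2 * μ (y + z)) ≤ ∑' y, μ 0 / μ z * (f y ^ 2 * μ y) := by
          apply Summable.tsum_le_tsum (fun y => ?_) (hshift_summable' z) (hf.mul_left _)
          calc f y ^ 2 * μ (y + z) ≤ f y ^ 2 * (μ 0 / μ z * μ y) :=
                mul_le_mul_of_nonneg_left (hμ_bd z y) (sq_nonneg _)
            _ = μ 0 / μ z * (f y ^ 2 * μ y) := by ring
      _ = μ 0 / μ z * N := tsum_mul_left
  -- the double-sum function
  set G : (Fin d → ℤ) × (Fin d → ℤ) → ℝ := fun p => c p.1 * (f (p.2 - p.1) ^ 2 * μ p.2) with hG_def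
  have hG_nonneg : ∀ p, 0 ≤ G p := fun p =>
    mul_nonneg (hc_nonneg _) (mul_nonneg (sq_nonneg _) (hμ_pos _).le)
  have hG_fiber : ∀ z, Summable fun x => G (z, x) := fun z =>
    (hshift_summable z).mul_left (c z)
  have hG_fiber_bd : ∀ z, (∑' x, G (z, x)) ≤ b z * N := by
    intro z
    have h1 : (∑' x, G (z, x)) = c z * ∑' x, f (x - z) ^ 2 * μ x := by
      simp only [hG_def]
      exact tsum_mul_left
    rw [h1]
    calc c z * ∑' x, f (x - z) ^ 2 * μ x ≤ c z * (μ 0 / μ z * N) :=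
          mul_le_mul_of_nonneg_left (hshift_bd z) (hc_nonneg z)
      _ = b z * N := by rw [← mul_assoc, hcb z]
  have hG_col : Summable fun z => ∑' x, G (z, x) :=
    Summable.of_nonneg_of_le (fun z => tsum_nonneg fun x => hG_nonneg (z, x))
      hG_fiber_bd (hb_sum.mul_right N)
  have hG_prod : Summable G :=
    (summable_prod_of_nonneg hG_nonneg).2 ⟨hG_fiber, hG_col⟩
  have hG_fiber_x : ∀ x, Summable fun z => G (z, x) := by
    intro x
    have hinj : Function.Injective (fun z : Fin d → ℤ => (z, x)) :=
      fun z₁ z₂ h => by simpa using h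
    exact hG_prod.comp_injective hinj
  have hswap : ∑' x, ∑' z, G (z, x) = ∑' z, ∑' x, G (z, x) :=
    Summable.tsum_comm (f := fun z x => G (z, x)) hG_prod
  -- summability of v² fibers
  have hv_sq : ∀ x, Summable fun z => c z * f (x - z) ^ 2 := by
    intro x
    have h := (hG_fiber_x x).mul_right (μ x)⁻¹
    apply h.congr
    intro z
    field_simp [hG_def, (hμ_pos x).ne']
    ring
  -- pointwise Cauchy-Schwarz
  have hCS : ∀ x, (∑' z, a z * f (x - z)) ^ 2 ≤ S * ∑' z, c z * f (x - z) ^ 2 := by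
    intro x
    have hu2 : Summable fun z => Real.sqrt (b z) ^ 2 := by
      apply hb_sum.congr
      intro z
      rw [Real.sq_sqrt (hb_nonneg z)]
    have hv2 : Summable fun z => (Real.sqrt (c z) * f (x - z)) ^ 2 := by
      apply (hv_sq x).congr
      intro z
      rw [mul_pow, Real.sq_sqrt (hc_nonneg z)]
    have h := tsum_cauchy_schwarz (fun z => Real.sqrt (b z))
      (fun z => Real.sqrt (c z) * f (x - z)) hu2 hv2
    have e1 : ∀ z, Real.sqrt (b z) * (Real.sqrt (c z) * f (x - z)) = a z * f (x - z) := by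
      intro z
      rw [← mul_assoc, ← Real.sqrt_mul (hb_nonneg z)]
      have : b z * c z = a z ^ 2 := by
        rw [hb_def, hc_def]
        calc a z * s z * (a z / s z) = a z * a z * (s z / s z) := by ring
          _ = a z ^ 2 := by rw [div_self (hs_pos z).ne', mul_one, sq]
      rw [this, Real.sqrt_sq (ha_nonneg z)]
    have e2 : ∀ z, Real.sqrt (b z) ^ 2 = b z := fun z => Real.sq_sqrt (hb_nonneg z)
    have e3 : ∀ z, (Real.sqrt (c z) * f (x - z)) ^ 2 = c z * f (x - z) ^ 2 := by
      intro z
      rw [mul_pow, Real.sq_sqrt (hc_nonneg z)]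
    simp only [e1, e2, e3] at h
    exact h
  -- multiply by μ x and sum
  have hpt : ∀ x, (∑' z, a z * f (x - z)) ^ 2 * μ x ≤ S * ∑' z, G (z, x) := by
    intro x
    have h1 : (∑' z, G (z, x)) = (∑' z, c z * f (x - z) ^ 2) * μ x := by
      rw [← tsum_mul_right]
      congr 1
      funext z
      rw [hG_def]
      ring
    rw [h1, ← mul_assoc]
    exact mul_le_mul_of_nonneg_right (hCS x) (hμ_pos x).le
  have hRHS_sum : Summable fun x => ∑' z, G (z, x) := by
    have h := hG_prod.prod_symm.prod
    apply h.congr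
    intro x
    rfl
  calc (∑' x, (∑' z, a z * f (x - z)) ^ 2 * μ x)
      ≤ ∑' x, S * ∑' z, G (z, x) :=
        Summable.tsum_le_tsum hpt hAf (hRHS_sum.mul_left S)
    _ = S * ∑' x, ∑' z, G (z, x) := tsum_mul_left
    _ = S * ∑' z, ∑' x, G (z, x) := by rw [hswap]
    _ ≤ S * (S * N) := by
        apply mul_le_mul_of_nonneg_left _ hS_nonneg
        calc (∑' z, ∑' x, G (z, x)) ≤ ∑' z, b z * N :=
              Summable.tsum_le_tsum hG_fiber_bd hG_col (hb_sum.mul_right N)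
          _ = S * N := by rw [hS_def]; exact tsum_mul_right
    _ = S ^ 2 * N := by ring
end

section
/- Let H₂ψ(x) = 2κ Δψ(x) + B(x)ψ(x) on l²(ℤ), where Δψ(x) = ψ(x+1) + ψ(x−1) − 2ψ(x), κ > 0, and B ∈ l¹(ℤ) with δ = Σ_{x∈ℤ} B(x) > 0. Then sup of the quadratic form (H₂ψ, ψ)/(ψ,ψ) over nonzero ψ ∈ l²(ℤ) is strictly positive; equivalently, H₂ has a positive eigenvalue λ₀(H₂) > 0 for every κ > 0. -/
open Filter Topology

private lemma stmt16_quad_zero {a c : ℝ} (h : ∀ t : ℝ, 2*t*a ≤ t^2*c) : a = 0 := by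
  by_contra ha
  have ha2 : 0 < a^2 := by positivity
  have key : ∀ ε : ℝ, 0 < ε → 2 ≤ ε * c := by
    intro ε hε
    have h1 := h (ε * a)
    nlinarith [h1, mul_pos hε ha2]
  have hc : 0 < |c| + 1 := by positivity
  have h2 := key ((|c|+1)⁻¹) (by positivity)
  have h3 : c ≤ |c| := le_abs_self c
  have h4 : (|c|+1)⁻¹ * c ≤ (|c|+1)⁻¹ * (|c|+1) := by
    apply mul_le_mul_of_nonneg_left _ (by positivity)
    linarith
  rw [inv_mul_cancel₀ (ne_of_gt hc)] at h4
  linarith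

private lemma stmt16_sum_shift {f : ℤ → ℝ} (h : Summable f) :
    Summable (fun x : ℤ => f (x+1)) := by
  have h2 := ((Equiv.addRight (1:ℤ)).summable_iff (f := f)).2 h
  have h3 : (f ∘ ⇑(Equiv.addRight (1:ℤ))) = fun x : ℤ => f (x+1) := by
    funext x; simp
  rwa [h3] at h2

private lemma stmt16_sum_dsq {ψ : ℤ → ℝ} (h : Summable (fun x => ψ x ^ 2)) :
    Summable (fun x : ℤ => (ψ (x+1) - ψ x)^2) := by
  have h1 : Summable (fun x : ℤ => ψ (x+1) ^ 2) := stmt16_sum_shift (f := fun x => ψ x ^ 2) h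
  have h2 : Summable (fun x : ℤ => 2 * ψ (x+1)^2 + 2 * ψ x ^2) :=
    (h1.mul_left 2).add (h.mul_left 2)
  exact Summable.of_nonneg_of_le (fun x => sq_nonneg _)
    (fun x => by nlinarith [sq_nonneg (ψ (x+1) + ψ x)]) h2

private lemma stmt16_sum_B {B ψ : ℤ → ℝ} (hB : Summable fun x => |B x|)
    (h : Summable (fun x => ψ x ^ 2)) :
    Summable (fun x : ℤ => B x * ψ x ^ 2) := by
  set T := ∑' x : ℤ, ψ x ^ 2 with hT
  have hle : ∀ x, ψ x ^ 2 ≤ T := fun x => Summable.le_tsum h x (fun j _ => sq_nonneg _)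
  apply Summable.of_norm_bounded (hB.mul_right T)
  intro x
  rw [Real.norm_eq_abs, abs_mul, abs_of_nonneg (sq_nonneg (ψ x))]
  have : 0 ≤ T := tsum_nonneg (fun x => sq_nonneg _)
  exact mul_le_mul_of_nonneg_left (hle x) (abs_nonneg _)

set_option maxHeartbeats 1000000 in
private lemma stmt16_trap {κ : ℝ} (hκ : 0 < κ) {B : ℤ → ℝ} (hB : Summable fun x => |B x|)
    (hδ : 0 < ∑' x : ℤ, B x) :
    ∃ χ : ℤ → ℝ, Summable (fun x => χ x ^ 2) ∧ (∑' x : ℤ, χ x ^ 2) ≤ 1 ∧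
      0 < -(2*κ) * (∑' x : ℤ, (χ (x+1) - χ x)^2) + ∑' x : ℤ, B x * χ x ^ 2 := by
  set δ := ∑' x : ℤ, B x with hδdef
  have hhs := hB.hasSum
  rw [HasSum] at hhs
  have hev : ∀ᶠ s : Finset ℤ in atTop, (∑' x : ℤ, |B x|) - δ/2 < ∑ x ∈ s, |B x| :=
    hhs.eventually (eventually_gt_nhds (by linarith))
  obtain ⟨s, hs⟩ := hev.exists
  set L : ℕ := s.sup Int.natAbs with hL
  have hsL : ∀ x ∈ s, (x.natAbs : ℕ) ≤ L := fun x hx => Finset.le_sup hx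
  obtain ⟨N, hN⟩ := exists_nat_gt (max (2*(L:ℝ)+1) (12*κ/δ))
  have hN1 : (2*(L:ℝ)+1) < N := lt_of_le_of_lt (le_max_left _ _) hN
  have hN2 : 12*κ/δ < N := lt_of_le_of_lt (le_max_right _ _) hN
  have hNpos : (0:ℝ) < N := by linarith [hN1]
  set L1 : ℕ := L + N with hL1
  set g : ℤ → ℝ := fun x => max 0 (min 1 (((L1:ℝ) - |(x:ℝ)|)/N)) with hg
  have hg01 : ∀ x, 0 ≤ g x ∧ g x ≤ 1 := by
    intro x
    refine ⟨le_max_left _ _, max_le (by norm_num) (min_le_left _ _)⟩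
  have hgone : ∀ x : ℤ, |(x:ℝ)| ≤ L → g x = 1 := by
    intro x hx
    have h1 : (1:ℝ) ≤ ((L1:ℝ) - |(x:ℝ)|)/N := by
      rw [le_div_iff₀ hNpos]
      push_cast [hL1]
      linarith
    simp only [hg]
    rw [min_eq_left h1, max_eq_right (by norm_num)]
  have hgzero : ∀ x : ℤ, (L1:ℝ) ≤ |(x:ℝ)| → g x = 0 := by
    intro x hx
    have h1 : ((L1:ℝ) - |(x:ℝ)|)/N ≤ 0 := div_nonpos_of_nonpos_of_nonneg (by linarith) hNpos.le
    simp only [hg]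
    rw [min_eq_right (by linarith), max_eq_left h1]
  have hglip : ∀ x : ℤ, |g (x+1) - g x| ≤ 1/N := by
    intro x
    have key : ∀ a b : ℝ, |max 0 (min 1 a) - max 0 (min 1 b)| ≤ |a - b| := by
      intro a b
      calc |max 0 (min 1 a) - max 0 (min 1 b)|
          ≤ max |0-0| |min 1 a - min 1 b| := abs_max_sub_max_le_max _ _ _ _
        _ = |min 1 a - min 1 b| := by simp
        _ ≤ max |1-1| |a - b| := abs_min_sub_min_le_max _ _ _ _
        _ = |a-b| := by simp
    have h2 := key (((L1:ℝ) - |((x+1:ℤ):ℝ)|)/N) (((L1:ℝ) - |(x:ℝ)|)/N)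
    have h3 : ((L1:ℝ) - |((x+1:ℤ):ℝ)|)/N - ((L1:ℝ) - |(x:ℝ)|)/N
        = (|(x:ℝ)| - |((x:ℝ)+1)|)/N := by push_cast; ring
    have h4 : |(|(x:ℝ)| - |((x:ℝ)+1)|)| ≤ 1 := by
      have := abs_abs_sub_abs_le_abs_sub ((x:ℝ)) ((x:ℝ)+1)
      simpa using this
    have h5 : |(|(x:ℝ)| - |((x:ℝ)+1)|)/N| ≤ 1/N := by
      rw [abs_div, abs_of_pos hNpos]
      exact div_le_div_of_nonneg_right h4 hNpos.le
    calc |g (x+1) - g x| ≤ _ := h2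
      _ ≤ 1/N := by rw [h3]; exact h5
  -- support of the discrete gradient
  set F : Finset ℤ := Finset.Icc (-(L1:ℤ)) (L1:ℤ) with hF
  have hDg0 : ∀ x : ℤ, x ∉ F → g (x+1) - g x = 0 := by
    intro x hx
    rw [hF, Finset.mem_Icc] at hx
    push_neg at hx
    rcases lt_or_ge x (-(L1:ℤ)) with h | h
    · have hx1 : (x:ℝ) + 1 ≤ -(L1:ℝ) := by exact_mod_cast (by omega : x + 1 ≤ -(L1:ℤ))
      have hx2 : (x:ℝ) ≤ -(L1:ℝ) := by linarith
      have e1 : g (x+1) = 0 := by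
        apply hgzero; push_cast
        rw [abs_of_nonpos (by linarith)]; linarith
      have e2 : g x = 0 := by
        apply hgzero
        rw [abs_of_nonpos (by linarith)]; linarith
      rw [e1, e2, sub_zero]
    · have hx3 : (L1:ℤ) < x := hx h
      have hx4 : (L1:ℝ) ≤ (x:ℝ) := by exact_mod_cast (by omega : (L1:ℤ) ≤ x)
      have e1 : g (x+1) = 0 := by
        apply hgzero; push_cast
        rw [abs_of_nonneg (by linarith)]; linarith
      have e2 : g x = 0 := by
        apply hgzero
        rw [abs_of_nonneg (by linarith)]; linarith
      rw [e1, e2, sub_zero]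
  have hcardF : ((F.card : ℝ)) = 2*(L1:ℝ)+1 := by
    rw [hF, Int.card_Icc]
    have : ((L1:ℤ) + 1 - -(L1:ℤ)) = 2*(L1:ℤ)+1 := by ring
    rw [this]
    have h2 : (((2*(L1:ℤ)+1).toNat : ℤ)) = 2*(L1:ℤ)+1 := Int.toNat_of_nonneg (by positivity)
    exact_mod_cast congrArg (Int.cast : ℤ → ℝ) h2
  -- kinetic bound
  have hKsum : Summable (fun x : ℤ => (g (x+1) - g x)^2) :=
    summable_of_ne_finset_zero (s := F) (fun x hx => by rw [hDg0 x hx]; ring)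
  have hKle : (∑' x : ℤ, (g (x+1) - g x)^2) ≤ (2*(L1:ℝ)+1) * (1/N)^2 := by
    rw [tsum_eq_sum (s := F) (fun x hx => by rw [hDg0 x hx]; ring)]
    calc ∑ x ∈ F, (g (x+1) - g x)^2 ≤ F.card • ((1/N:ℝ)^2) := by
          apply Finset.sum_le_card_nsmul
          intro x _
          rw [← sq_abs]
          exact pow_le_pow_left₀ (abs_nonneg _) (hglip x) 2
      _ = (F.card : ℝ) * (1/N)^2 := by rw [nsmul_eq_mul]
      _ = (2*(L1:ℝ)+1) * (1/N)^2 := by rw [hcardF]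
  have hKfinal : 2*κ * (∑' x : ℤ, (g (x+1) - g x)^2) < δ/2 := by
    have h1 : (2*(L1:ℝ)+1) ≤ 3*N := by
      push_cast [hL1]; linarith
    have h2 : (∑' x : ℤ, (g (x+1) - g x)^2) ≤ 3*N * (1/N)^2 :=
      le_trans hKle (mul_le_mul_of_nonneg_right h1 (by positivity))
    have h3 : 3*(N:ℝ) * (1/N)^2 = 3/N := by field_simp
    have h4 : 2*κ * (3/(N:ℝ)) < δ/2 := by
      rw [div_lt_iff₀ hδ] at hN2
      rw [mul_comm, div_mul_eq_mul_div, div_lt_iff₀ hNpos]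
      nlinarith
    calc 2*κ * (∑' x : ℤ, (g (x+1) - g x)^2) ≤ 2*κ * (3/N) := by
          rw [h3] at h2; exact mul_le_mul_of_nonneg_left h2 (by positivity)
      _ < δ/2 := h4
  -- potential bound
  have hgsq : Summable (fun x : ℤ => g x ^ 2) := by
    apply summable_of_ne_finset_zero (s := F)
    intro x hx
    rw [hF, Finset.mem_Icc] at hx
    push_neg at hx
    have : g x = 0 := by
      apply hgzero
      rcases lt_or_ge x (-(L1:ℤ)) with h | h
      · have : (x:ℝ) ≤ -(L1:ℝ) := by exact_mod_cast (by omega : x ≤ -(L1:ℤ))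
        rw [abs_of_nonpos (by linarith)]; linarith
      · have hx3 : (L1:ℤ) < x := hx h
        have : (L1:ℝ) ≤ (x:ℝ) := by exact_mod_cast (by omega : (L1:ℤ) ≤ x)
        rw [abs_of_nonneg (by linarith)]; linarith
    rw [this]; ring
  have hBsummable : Summable B := hB.of_abs
  have hBg1sum : Summable (fun x : ℤ => B x * (g x ^2 - 1)) := by
    apply Summable.of_norm_bounded hB
    intro x
    rw [Real.norm_eq_abs, abs_mul]
    have h1 : |g x ^2 - 1| ≤ 1 := by
      rw [abs_le]
      constructor <;> nlinarith [(hg01 x).1, (hg01 x).2]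
    nlinarith [abs_nonneg (B x)]
  have hsplit : (∑' x : ℤ, B x * g x ^ 2) = δ + ∑' x : ℤ, B x * (g x ^2 - 1) := by
    rw [hδdef, ← Summable.tsum_add hBsummable hBg1sum]
    exact tsum_congr (fun x => by ring)
  have htail : |∑' x : ℤ, B x * (g x ^2 - 1)| ≤ ∑' x : ℤ, (if x ∈ s then 0 else |B x|) := by
    have hsum2 : Summable (fun x : ℤ => |B x * (g x ^2 - 1)|) := hBg1sum.abs
    have h1 : ‖∑' x : ℤ, B x * (g x ^2 - 1)‖ ≤ ∑' x : ℤ, ‖B x * (g x ^2 - 1)‖ :=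
      norm_tsum_le_tsum_norm (f := fun x : ℤ => B x * (g x ^2 - 1))
        (by simpa only [Real.norm_eq_abs] using hsum2)
    rw [Real.norm_eq_abs] at h1
    simp only [Real.norm_eq_abs] at h1
    refine le_trans h1 ?_
    apply Summable.tsum_le_tsum _ hsum2
    · apply Summable.of_nonneg_of_le (fun x => by positivity)
        (fun x => by split <;> simp [abs_nonneg]) hB
    · intro x
      by_cases hx : x ∈ s
      · simp only [hx, if_true]
        have hgx : g x = 1 := by
          apply hgone
          have h9 := hsL x hx
          calc |(x:ℝ)| = ((x.natAbs : ℤ) : ℝ) := by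
                rw [← Int.abs_eq_natAbs, Int.cast_abs]
            _ ≤ L := by exact_mod_cast h9
        rw [hgx]
        norm_num
      · simp only [hx, if_false]
        rw [abs_mul]
        have h1 : |g x ^2 - 1| ≤ 1 := by
          rw [abs_le]
          constructor <;> nlinarith [(hg01 x).1, (hg01 x).2]
        nlinarith [abs_nonneg (B x)]
  have hite : (∑' x : ℤ, (if x ∈ s then 0 else |B x|)) < δ/2 := by
    have hsum1 : Summable (fun x : ℤ => if x ∈ s then |B x| else 0) :=
      summable_of_ne_finset_zero (s := s) (fun x hx => if_neg hx)
    have hsum2 : Summable (fun x : ℤ => if x ∈ s then 0 else |B x|) := by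
      apply Summable.of_nonneg_of_le (fun x => by positivity)
        (fun x => by split <;> simp [abs_nonneg]) hB
    have e1 : (∑' x : ℤ, (if x ∈ s then |B x| else 0)) = ∑ x ∈ s, (if x ∈ s then |B x| else 0) :=
      tsum_eq_sum (fun x hx => if_neg hx)
    have e2 : (∑ x ∈ s, (if x ∈ s then |B x| else 0)) = ∑ x ∈ s, |B x| :=
      Finset.sum_congr rfl (fun x hx => if_pos hx)
    have hdecomp : (∑' x : ℤ, |B x|)
        = (∑ x ∈ s, |B x|) + ∑' x : ℤ, (if x ∈ s then 0 else |B x|) := by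
      rw [← e2, ← e1, ← Summable.tsum_add hsum1 hsum2]
      exact tsum_congr (fun x => by split <;> simp)
    linarith [hs, hdecomp]
  have hPge : δ/2 < ∑' x : ℤ, B x * g x ^ 2 := by
    rw [hsplit]
    have := abs_le.1 htail
    linarith [this.1, hite]
  -- normalize
  set T := ∑' x : ℤ, g x ^ 2 with hT
  have hT1 : 1 ≤ T := by
    have h0 : g 0 = 1 := hgone 0 (by simp)
    have := Summable.le_tsum hgsq 0 (fun j _ => sq_nonneg _)
    rw [h0] at this
    simpa using this
  have hTpos : 0 < T := lt_of_lt_of_le one_pos hT1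
  set c : ℝ := (Real.sqrt T)⁻¹ with hc
  have hc2 : c^2 = T⁻¹ := by
    rw [hc, inv_pow, Real.sq_sqrt hTpos.le]
  have hc2pos : 0 < c^2 := by rw [hc2]; positivity
  refine ⟨fun x => c * g x, ?_, ?_, ?_⟩
  · have : (fun x : ℤ => (c * g x)^2) = fun x => c^2 * g x ^2 := by
      funext x; ring
    rw [this]
    exact hgsq.mul_left _
  · have : (fun x : ℤ => (c * g x)^2) = fun x => c^2 * g x ^2 := by
      funext x; ring
    rw [this, tsum_mul_left, ← hT, hc2, inv_mul_cancel₀ (ne_of_gt hTpos)]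
  · have e1 : (fun x : ℤ => (c * g (x+1) - c * g x)^2)
        = fun x => c^2 * (g (x+1) - g x)^2 := by funext x; ring
    have e2 : (fun x : ℤ => B x * (c * g x)^2) = fun x => c^2 * (B x * g x ^2) := by
      funext x; ring
    rw [e1, e2, tsum_mul_left, tsum_mul_left]
    have hEg : 0 < -(2*κ) * (∑' x : ℤ, (g (x+1) - g x)^2) + ∑' x : ℤ, B x * g x ^ 2 := by
      linarith [hKfinal, hPge]
    nlinarith [hc2pos, hEg]

private lemma stmt16_scale (κ : ℝ) (B : ℤ → ℝ) (c : ℝ) (v : ℤ → ℝ) :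
    -(2*κ) * (∑' x : ℤ, (c * v (x+1) - c * v x)^2) + ∑' x : ℤ, B x * (c * v x)^2
      = c^2 * (-(2*κ) * (∑' x : ℤ, (v (x+1) - v x)^2) + ∑' x : ℤ, B x * v x ^2) := by
  have e1 : (fun x : ℤ => (c * v (x+1) - c * v x)^2)
      = fun x => c^2 * (v (x+1) - v x)^2 := by funext x; ring
  have e2 : (fun x : ℤ => B x * (c * v x)^2) = fun x => c^2 * (B x * v x^2) := by
    funext x; ring
  rw [e1, e2, tsum_mul_left, tsum_mul_left]; ring

set_option maxHeartbeats 1000000 in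
private lemma stmt16_eigen {κ : ℝ} (hκ : 0 < κ) {B : ℤ → ℝ} (hB : Summable fun x => |B x|)
    (hδ : 0 < ∑' x : ℤ, B x) :
    ∃ lam : ℝ, 0 < lam ∧ ∃ ψ : ℤ → ℝ, Summable (fun x => ψ x ^ 2) ∧
      (∑' x : ℤ, ψ x ^ 2) = 1 ∧
      ∀ y : ℤ, 2 * κ * (ψ (y + 1) + ψ (y - 1) - 2 * ψ y) + B y * ψ y = lam * ψ y := by
  classical
  set E : (ℤ → ℝ) → ℝ := fun v =>
    -(2*κ) * (∑' x : ℤ, (v (x+1) - v x)^2) + ∑' x : ℤ, B x * v x ^2 with hE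
  set S : Set (ℤ → ℝ) := {v | Summable (fun x => v x ^2) ∧ (∑' x : ℤ, v x ^2) ≤ 1} with hS
  have hzero : (fun _ : ℤ => (0:ℝ)) ∈ S := by
    refine ⟨?_, ?_⟩
    · simpa using summable_zero
    · simp
  have hne : (E '' S).Nonempty := ⟨E (fun _ => 0), ⟨_, hzero, rfl⟩⟩
  have hEub : ∀ v ∈ S, E v ≤ ∑' x : ℤ, |B x| := by
    intro v hv
    obtain ⟨hv1, hv2⟩ := hv
    have hK : 0 ≤ ∑' x : ℤ, (v (x+1) - v x)^2 := tsum_nonneg fun x => sq_nonneg _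
    have hterm : ∀ x : ℤ, B x * v x ^2 ≤ |B x| := by
      intro x
      have h1 : v x ^2 ≤ 1 := le_trans (Summable.le_tsum hv1 x fun j _ => sq_nonneg _) hv2
      have h2 : B x ≤ |B x| := le_abs_self _
      nlinarith [sq_nonneg (v x), abs_nonneg (B x)]
    have hP : (∑' x : ℤ, B x * v x ^2) ≤ ∑' x : ℤ, |B x| :=
      Summable.tsum_le_tsum hterm (stmt16_sum_B hB hv1) hB
    have h3 : -(2*κ) * (∑' x : ℤ, (v (x+1) - v x)^2) ≤ 0 := by nlinarith
    simp only [hE]; linarith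
  have hbdd : BddAbove (E '' S) := ⟨_, fun a ⟨v, hv, hva⟩ => hva ▸ hEub v hv⟩
  set m := sSup (E '' S) with hm
  obtain ⟨χ, hχ1, hχ2, hχ3⟩ := stmt16_trap hκ hB hδ
  have hmpos : 0 < m := lt_of_lt_of_le hχ3 (le_csSup hbdd ⟨χ, ⟨hχ1, hχ2⟩, rfl⟩)
  -- E v ≤ m * ∑ v² for every square-summable v
  have hEle : ∀ v : ℤ → ℝ, Summable (fun x => v x ^2) → E v ≤ m * ∑' x : ℤ, v x ^2 := by
    intro v hv
    set T := ∑' x : ℤ, v x ^2 with hT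
    have hTnn : 0 ≤ T := tsum_nonneg fun x => sq_nonneg _
    rcases eq_or_lt_of_le hTnn with h0 | hTpos
    · have hvz : ∀ x, v x = 0 := by
        intro x
        have h1 := Summable.le_tsum hv x fun j _ => sq_nonneg _
        rw [← hT, ← h0] at h1
        nlinarith [sq_nonneg (v x)]
      have e1 : (fun x : ℤ => (v (x+1) - v x)^2) = fun _ => 0 := by
        funext x; rw [hvz, hvz]; ring
      have e2 : (fun x : ℤ => B x * v x ^2) = fun _ => 0 := by funext x; rw [hvz]; ring
      have hEv : E v = 0 := by simp [hE, e1, e2]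
      rw [hEv, ← h0]; simp
    · set c : ℝ := (Real.sqrt T)⁻¹ with hc
      have hc2 : c^2 = T⁻¹ := by rw [hc, inv_pow, Real.sq_sqrt hTnn]
      have hcv_mem : (fun x => c * v x) ∈ S := by
        have e : (fun x : ℤ => (c * v x)^2) = fun x => c^2 * v x^2 := by funext x; ring
        refine ⟨?_, ?_⟩
        · rw [e]; exact hv.mul_left _
        · rw [e, tsum_mul_left, ← hT, hc2, inv_mul_cancel₀ (ne_of_gt hTpos)]
      have h1 : E (fun x => c * v x) ≤ m := le_csSup hbdd ⟨_, hcv_mem, rfl⟩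
      have h2 : E (fun x => c * v x) = c^2 * E v := by
        simp only [hE]; exact stmt16_scale κ B c v
      rw [h2, hc2] at h1
      have h3 := mul_le_mul_of_nonneg_left h1 hTnn
      rw [← mul_assoc, mul_inv_cancel₀ (ne_of_gt hTpos), one_mul] at h3
      linarith
  -- maximizing sequence
  have hseq : ∀ n : ℕ, ∃ v, v ∈ S ∧ m - 1/((n:ℝ)+1) < E v := by
    intro n
    have h1 : m - 1/((n:ℝ)+1) < m := by
      have : (0:ℝ) < 1/((n:ℝ)+1) := by positivity
      linarith
    obtain ⟨a, ⟨v, hv, rfl⟩, ha⟩ := exists_lt_of_lt_csSup hne h1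
    exact ⟨v, hv, ha⟩
  choose u hu1 hu2 using hseq
  -- compactness
  have hcs : IsCompact (Set.pi Set.univ (fun _ : ℤ => Set.Icc (-1:ℝ) 1)) :=
    isCompact_univ_pi fun _ => isCompact_Icc
  have hmem : ∀ n, u n ∈ Set.pi Set.univ (fun _ : ℤ => Set.Icc (-1:ℝ) 1) := by
    intro n x _
    have h1 : (u n x)^2 ≤ 1 :=
      le_trans (Summable.le_tsum (hu1 n).1 x fun j _ => sq_nonneg _) (hu1 n).2
    constructor <;> nlinarith
  obtain ⟨ψ, hψs0, φ, hφmono, hφconv⟩ := hcs.tendsto_subseq hmem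
  have hpt : ∀ x : ℤ, Filter.Tendsto (fun n => u (φ n) x) Filter.atTop (𝓝 (ψ x)) :=
    fun x => (tendsto_pi_nhds.1 hφconv) x
  -- Fatou for the norm
  have hFle : ∀ F : Finset ℤ, (∑ x ∈ F, ψ x^2) ≤ 1 := by
    intro F
    have hlim : Filter.Tendsto (fun n => ∑ x ∈ F, (u (φ n) x)^2) Filter.atTop
        (𝓝 (∑ x ∈ F, ψ x^2)) := tendsto_finset_sum _ fun x _ => (hpt x).pow 2
    apply le_of_tendsto hlim
    filter_upwards with n
    exact le_trans (Summable.sum_le_tsum F (fun x _ => sq_nonneg _) (hu1 _).1) (hu1 _).2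
  have hψsum : Summable (fun x => ψ x ^2) := summable_of_sum_le (fun x => sq_nonneg _) hFle
  have hψle1 : (∑' x : ℤ, ψ x ^2) ≤ 1 := Summable.tsum_le_of_sum_le hψsum hFle
  have hψS : ψ ∈ S := ⟨hψsum, hψle1⟩
  -- dominated convergence for the potential part
  have hPconv : Filter.Tendsto (fun n => ∑' x : ℤ, B x * (u (φ n) x)^2) Filter.atTop
      (𝓝 (∑' x : ℤ, B x * ψ x ^2)) := by
    apply tendsto_tsum_of_dominated_convergence (bound := fun x => |B x|) hB
    · intro x
      exact ((hpt x).pow 2).const_mul (B x)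
    · filter_upwards with n x
      rw [Real.norm_eq_abs, abs_mul, abs_of_nonneg (sq_nonneg (u (φ n) x))]
      have h1 : (u (φ n) x)^2 ≤ 1 :=
        le_trans (Summable.le_tsum (hu1 _).1 x fun j _ => sq_nonneg _) (hu1 _).2
      nlinarith [abs_nonneg (B x)]
  -- energies converge to m
  have hEub' : ∀ n, E (u n) ≤ m := fun n => le_csSup hbdd ⟨_, hu1 n, rfl⟩
  have hEconv : Filter.Tendsto (fun n => E (u (φ n))) Filter.atTop (𝓝 m) := by
    have h0 : Filter.Tendsto (fun n : ℕ => 1/((n:ℝ)+1)) Filter.atTop (𝓝 0) :=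
      tendsto_one_div_add_atTop_nhds_zero_nat
    have h1 : Filter.Tendsto (fun n : ℕ => 1/((φ n : ℝ)+1)) Filter.atTop (𝓝 0) :=
      h0.comp hφmono.tendsto_atTop
    have hlow : Filter.Tendsto (fun n : ℕ => m - 1/((φ n : ℝ)+1)) Filter.atTop (𝓝 m) := by
      simpa using tendsto_const_nhds.sub h1
    apply tendsto_of_tendsto_of_tendsto_of_le_of_le hlow tendsto_const_nhds
    · intro n; exact (hu2 (φ n)).le
    · intro n; exact hEub' (φ n)
  -- the kinetic parts converge
  set Pinf := ∑' x : ℤ, B x * ψ x ^2 with hPinf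
  set k := (Pinf - m)/(2*κ) with hk
  have hKconv : Filter.Tendsto (fun n => ∑' x : ℤ, (u (φ n) (x+1) - u (φ n) x)^2)
      Filter.atTop (𝓝 k) := by
    have he : ∀ n : ℕ, (∑' x : ℤ, (u (φ n) (x+1) - u (φ n) x)^2)
        = ((∑' x : ℤ, B x * (u (φ n) x)^2) - E (u (φ n)))/(2*κ) := by
      intro n
      simp only [hE]
      field_simp
      ring
    simp only [he]
    exact (hPconv.sub hEconv).div_const (2*κ)
  -- Fatou for the kinetic part
  have hFK : ∀ F : Finset ℤ, (∑ x ∈ F, (ψ (x+1) - ψ x)^2) ≤ k := by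
    intro F
    have hlim : Filter.Tendsto (fun n => ∑ x ∈ F, (u (φ n) (x+1) - u (φ n) x)^2)
        Filter.atTop (𝓝 (∑ x ∈ F, (ψ (x+1) - ψ x)^2)) :=
      tendsto_finset_sum _ fun x _ => ((hpt (x+1)).sub (hpt x)).pow 2
    refine le_of_tendsto_of_tendsto' hlim hKconv ?_
    intro n
    exact Summable.sum_le_tsum F (fun x _ => sq_nonneg _) (stmt16_sum_dsq (hu1 _).1)
  have hKψsum : Summable (fun x : ℤ => (ψ (x+1) - ψ x)^2) := stmt16_sum_dsq hψsum
  have hKψle : (∑' x : ℤ, (ψ (x+1) - ψ x)^2) ≤ k := Summable.tsum_le_of_sum_le hKψsum hFK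
  -- E ψ = m
  have hEψge : m ≤ E ψ := by
    have h1 : -(2*κ) * k ≤ -(2*κ) * (∑' x : ℤ, (ψ (x+1) - ψ x)^2) := by nlinarith
    have h2 : m = -(2*κ) * k + Pinf := by rw [hk]; field_simp; ring
    have h3 : E ψ = -(2*κ) * (∑' x : ℤ, (ψ (x+1) - ψ x)^2) + Pinf := by
      simp only [hE, hPinf]
    linarith
  have hEψ : E ψ = m := le_antisymm (le_csSup hbdd ⟨_, hψS, rfl⟩) hEψge
  -- the norm is exactly one
  have hTψ : (∑' x : ℤ, ψ x ^2) = 1 := by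
    by_contra hne1
    have hlt : (∑' x : ℤ, ψ x ^2) < 1 := lt_of_le_of_ne hψle1 hne1
    have h1 := hEle ψ hψsum
    rw [hEψ] at h1
    nlinarith [hmpos, (tsum_nonneg (fun x : ℤ => sq_nonneg (ψ x)) : 0 ≤ ∑' x : ℤ, ψ x ^ 2)]
  -- Euler-Lagrange equations
  refine ⟨m, hmpos, ψ, hψsum, hTψ, ?_⟩
  intro y
  set d : ℤ → ℝ := fun x => if x = y then (1:ℝ) else 0 with hd
  have hyne : y - 1 ≠ y := by omega
  have hyne2 : y + 1 ≠ y := by omega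
  have hdy : d y = 1 := if_pos rfl
  have hdy1 : d (y-1) = 0 := if_neg hyne
  have hdy2 : d (y+1) = 0 := if_neg hyne2
  have hEL : ∀ t : ℝ,
      2*t*((2*κ*(ψ (y+1) + ψ (y-1) - 2*ψ y) + B y * ψ y) - m * ψ y)
        ≤ t^2 * (m + 4*κ - B y) := by
    intro t
    set r : ℤ → ℝ := fun x =>
      2*t*(ψ (x+1) - ψ x)*(d (x+1) - d x) + t^2*(d (x+1) - d x)^2 with hr
    have hr0 : ∀ x : ℤ, x ∉ ({y-1, y} : Finset ℤ) → r x = 0 := by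
      intro x hx
      simp only [Finset.mem_insert, Finset.mem_singleton] at hx
      push_neg at hx
      have hd1 : d x = 0 := if_neg hx.2
      have hd2 : d (x+1) = 0 := if_neg (by omega)
      simp only [hr, hd1, hd2]; ring
    have hrsum : Summable r := summable_of_ne_finset_zero hr0
    set q : ℤ → ℝ := fun x => 2*t*(ψ x)*(d x) + t^2*(d x)^2 with hq
    have hq0 : ∀ x : ℤ, x ∉ ({y} : Finset ℤ) → q x = 0 := by
      intro x hx
      simp only [Finset.mem_singleton] at hx
      have hd1 : d x = 0 := if_neg hx
      simp only [hq, hd1]; ring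
    have hqsum : Summable q := summable_of_ne_finset_zero hq0
    set w : ℤ → ℝ := fun x => B x * q x with hw
    have hw0 : ∀ x : ℤ, x ∉ ({y} : Finset ℤ) → w x = 0 := by
      intro x hx
      simp only [hw, hq0 x hx]; ring
    have hwsum : Summable w := summable_of_ne_finset_zero hw0
    -- values of the corrections
    have hrval : (∑' x : ℤ, r x) = 2*t*(2*ψ y - ψ (y-1) - ψ (y+1)) + 2*t^2 := by
      rw [tsum_eq_sum (s := {y-1, y}) hr0, Finset.sum_pair hyne]
      have e1 : (y - 1) + 1 = y := by ring
      simp only [hr, e1, hdy, hdy1, hdy2]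
      ring
    have hqval : (∑' x : ℤ, q x) = 2*t*ψ y + t^2 := by
      rw [tsum_eq_sum (s := {y}) hq0, Finset.sum_singleton]
      simp only [hq, hdy]; ring
    have hwval : (∑' x : ℤ, w x) = B y * (2*t*ψ y + t^2) := by
      rw [tsum_eq_sum (s := {y}) hw0, Finset.sum_singleton]
      simp only [hw, hq, hdy]; ring
    -- expansions
    have hKexp : (∑' x : ℤ, ((ψ (x+1) + t * d (x+1)) - (ψ x + t * d x))^2)
        = (∑' x : ℤ, (ψ (x+1) - ψ x)^2) + ∑' x : ℤ, r x := by
      rw [← Summable.tsum_add hKψsum hrsum]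
      exact tsum_congr fun x => by simp only [hr]; ring
    have hNexp : (∑' x : ℤ, (ψ x + t * d x)^2)
        = (∑' x : ℤ, ψ x^2) + ∑' x : ℤ, q x := by
      rw [← Summable.tsum_add hψsum hqsum]
      exact tsum_congr fun x => by simp only [hq]; ring
    have hBψsum : Summable (fun x : ℤ => B x * ψ x ^2) := stmt16_sum_B hB hψsum
    have hBexp : (∑' x : ℤ, B x * (ψ x + t * d x)^2)
        = (∑' x : ℤ, B x * ψ x^2) + ∑' x : ℤ, w x := by
      rw [← Summable.tsum_add hBψsum hwsum]
      exact tsum_congr fun x => by simp only [hw, hq]; ring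
    have husum : Summable (fun x : ℤ => (ψ x + t * d x)^2) := by
      have e : (fun x : ℤ => (ψ x + t * d x)^2) = fun x => ψ x^2 + q x := by
        funext x; simp only [hq]; ring
      rw [e]; exact hψsum.add hqsum
    have hcon := hEle (fun x => ψ x + t * d x) husum
    simp only [hE] at hcon
    rw [hKexp, hNexp, hBexp, hrval, hqval, hwval, hTψ] at hcon
    have hEψ' : -(2*κ) * (∑' x : ℤ, (ψ (x+1) - ψ x)^2) + (∑' x : ℤ, B x * ψ x ^2) = m := by
      simpa only [hE] using hEψ
    nlinarith [hcon, hEψ']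
  have hG := stmt16_quad_zero hEL
  linarith [hG]

private lemma stmt16_memlp {ψ : ℤ → ℝ} (h : Summable fun x => ψ x ^ 2) : Memℓp ψ 2 := by
  apply memℓp_gen
  have e : (fun x : ℤ => ‖ψ x‖ ^ (2:ENNReal).toReal) = fun x => ψ x ^ 2 := by
    funext x
    rw [ENNReal.toReal_ofNat, show ((2:ℝ)) = ((2:ℕ):ℝ) by norm_num, Real.rpow_natCast,
      Real.norm_eq_abs, sq_abs]
  rw [e]
  exact h

/-- for `H₂ψ(x) = 2κ(ψ(x+1)+ψ(x−1)−2ψ(x)) + B(x)ψ(x)` on `l²(ℤ)`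
with `κ > 0`, `B ∈ l¹(ℤ)` and `δ = Σ_x B(x) > 0`, the supremum of the quadratic
form is strictly positive; equivalently `H₂` has a positive eigenvalue. -/
theorem stmt16 (κ : ℝ) (hκ : 0 < κ)
    (B : ℤ → ℝ) (hB : Summable fun x => |B x|) (hδ : 0 < ∑' x : ℤ, B x) :
    (∃ ψ : ℤ → ℝ, ψ ≠ 0 ∧ Memℓp ψ 2 ∧
      0 < ∑' x : ℤ, (2 * κ * (ψ (x + 1) + ψ (x - 1) - 2 * ψ x) + B x * ψ x) * ψ x) ∧
    (∃ lam : ℝ, 0 < lam ∧ ∃ ψ : ℤ → ℝ, ψ ≠ 0 ∧ Memℓp ψ 2 ∧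
      ∀ x : ℤ, 2 * κ * (ψ (x + 1) + ψ (x - 1) - 2 * ψ x) + B x * ψ x
        = lam * ψ x) := by
  obtain ⟨lam, hlam, ψ, hψsum, hψ1, hψeq⟩ := stmt16_eigen hκ hB hδ
  have hψne : ψ ≠ 0 := by
    intro h
    rw [h] at hψ1
    simp at hψ1
  have hmem : Memℓp ψ 2 := stmt16_memlp hψsum
  constructor
  · refine ⟨ψ, hψne, hmem, ?_⟩
    have e : (fun x : ℤ => (2 * κ * (ψ (x + 1) + ψ (x - 1) - 2 * ψ x) + B x * ψ x) * ψ x)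
        = fun x => lam * ψ x ^ 2 := by
      funext x
      rw [hψeq x]
      ring
    rw [e, tsum_mul_left, hψ1, mul_one]
    exact hlam
  · exact ⟨lam, hlam, ψ, hψne, hmem, hψeq⟩
end
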